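/- Let f₁,…,fₙ : S¹ → S¹ be continuous open maps and let M be a minimal set for IFS(f₁,…,fₙ), with canonical decomposition M = 𝓘 ∪ K ∪ N. If the interior of M is nonempty, then one of the following holds: M = S¹; or ∂𝓘 ∩ N ≠ ∅; or K = ∅ (so M = 𝓘 ∪ N); or N = ∅ (so M = 𝓘 ∪ K). -/

import Mathlib

open Set Topology Filter

/-- The circle. -/
abbrev S1 := AddCircle (1 : ℝ)

/-- Apply a word `l = [i₁, …, i_k]` of generators: `f i₁ ∘ ⋯ ∘ f i_k`. -/
def applyWord {X : Type*} {n : ℕ} (f : Fin n → X → X) (l : List (Fin n)) (x : X) : X :=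
  l.foldr (fun i y => f i y) x

/-- The orbit of `x` under the semigroup `IFS(f₁,…,fₙ)` (nonempty words). -/
def orbitIFS {X : Type*} {n : ℕ} (f : Fin n → X → X) (x : X) : Set X :=
  {y | ∃ l : List (Fin n), l ≠ [] ∧ y = applyWord f l x}

/-- `M` is a minimal set for the IFS generated by `f₁,…,fₙ`. -/
def IsMinimalIFS {X : Type*} [TopologicalSpace X] {n : ℕ} (f : Fin n → X → X)
    (M : Set X) : Prop :=
  M.Nonempty ∧ IsClosed M ∧ (∀ i, f i '' M ⊆ M) ∧
    ∀ x ∈ M, closure (orbitIFS f x) = M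

/-- A Cantor set: nonempty, compact, perfect and totally disconnected. -/
def IsCantorSet {X : Type*} [TopologicalSpace X] (K : Set X) : Prop :=
  K.Nonempty ∧ IsCompact K ∧ Perfect K ∧ IsTotallyDisconnected K

/-- `X` is (homeomorphic to) the circle or a (nondegenerate) closed interval. -/
def IsCircleOrInterval (X : Type*) [TopologicalSpace X] : Prop :=
  Nonempty (X ≃ₜ S1) ∨ ∃ a b : ℝ, a < b ∧ Nonempty (X ≃ₜ Set.Icc a b)

/-- The canonical decomposition `M = 𝓘 ∪ K ∪ N` of a closed set:
`𝓘` is the interior (union of components of the interior), `K` is the maximal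
Cantor set contained in `M \ 𝓘` (possibly empty), and `N` is the countable remainder. -/
def IsCanonicalDecomp {X : Type*} [TopologicalSpace X] (M I K N : Set X) : Prop :=
  I = interior M ∧
  (IsCantorSet K ∨ K = ∅) ∧
  K ⊆ M \ I ∧
  (∀ K₁ : Set X, IsCantorSet K₁ → K ⊆ K₁ → K₁ ⊆ M \ I → K₁ = K) ∧
  N = M \ (I ∪ K) ∧
  N.Countable

/-- A symmetric Cantorval: a nonempty compact set which is the closure of its interior,
and such that both endpoints of every nontrivial connected component are accumulation
points of one-point connected components. -/
def IsSymmetricCantorval {X : Type*} [TopologicalSpace X] (M : Set X) : Prop :=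
  M.Nonempty ∧ IsCompact M ∧ M = closure (interior M) ∧
  ∀ x ∈ M, ¬ (connectedComponentIn M x).Subsingleton →
    ∀ z ∈ frontier (connectedComponentIn M x),
      AccPt z (𝓟 {y | y ∈ M ∧ connectedComponentIn M y = {y}})


theorem stmt9 {n : ℕ} (f : Fin n → S1 → S1)
    (hcont : ∀ i, Continuous (f i)) (hopen : ∀ i, IsOpenMap (f i))
    (M I K N : Set S1) (hM : IsMinimalIFS f M) (hd : IsCanonicalDecomp M I K N)
    (hint : (interior M).Nonempty) :
    M = Set.univ ∨ (frontier I ∩ N).Nonempty ∨ K = ∅ ∨ N = ∅ := by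
  obtain ⟨hMne, hMcl, hinv, hmin⟩ := hM
  obtain ⟨hI, hK, hKsub, hKmax, hN, hNcount⟩ := hd
  -- interior M is invariant
  have hIinv : ∀ i, f i '' interior M ⊆ interior M := by
    intro i
    apply interior_maximal
    · exact (Set.image_mono interior_subset).trans (hinv i)
    · exact (hopen i) _ isOpen_interior
  set C := closure (interior M) with hC
  have hCsubM : C ⊆ M := closure_minimal interior_subset hMcl
  have hCinv : ∀ i, f i '' C ⊆ C := by
    intro i
    calc f i '' C ⊆ closure (f i '' interior M) :=
          (hcont i).continuousOn.image_closure
      _ ⊆ C := closure_mono (hIinv i)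
  obtain ⟨x, hx⟩ := hint
  have hxC : x ∈ C := subset_closure hx
  have horb : ∀ l : List (Fin n), applyWord f l x ∈ C := by
    intro l
    induction l with
    | nil => exact hxC
    | cons i t ih => exact hCinv i ⟨_, ih, rfl⟩
  have hMC : M = C := by
    have h1 : M = closure (orbitIFS f x) := (hmin x (interior_subset hx)).symm
    refine Set.Subset.antisymm ?_ hCsubM
    rw [h1]
    refine closure_minimal ?_ isClosed_closure
    rintro y ⟨l, -, rfl⟩
    exact horb l
  -- conclude
  by_cases hfn : (frontier I ∩ N).Nonempty
  · exact Or.inr (Or.inl hfn)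
  · refine Or.inr (Or.inr (Or.inr ?_))
    rw [Set.not_nonempty_iff_eq_empty] at hfn
    rw [hN]
    ext y
    simp only [Set.mem_diff, Set.mem_union, Set.mem_empty_iff_false, iff_false, not_and, not_not]
    intro hyM
    by_contra hy
    push_neg at hy
    obtain ⟨hyI, hyK⟩ := hy
    have hyF : y ∈ frontier I := by
      rw [hI, IsOpen.frontier_eq isOpen_interior]
      exact ⟨le_of_eq hMC hyM, hI ▸ hyI⟩
    have : y ∈ frontier I ∩ N := ⟨hyF, hN ▸ ⟨hyM, fun h => h.elim hyI hyK⟩⟩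
    rw [hfn] at this
    exact this.elim
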